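/- Let n = 2m + 1 be an odd positive integer (m ≥ 0). Then, in the polynomial ring ℝ[t], ∏_{d | n} ψ_d(2t) = 2·(T_{m+1}(t) − T_m(t)), where the product is over the positive divisors d of n, ψ_d(2t) denotes the composition of ψ_d with the polynomial 2t, and T_k denotes the k-th Chebyshev polynomial of the first kind. -/

import Mathlib

open scoped Real
open Polynomial

noncomputable section

/-- `ψ_d`: the minimal polynomial over ℚ of `2 cos(2π/d)`, regarded as a polynomial in `ℝ[t]`. -/
def psiR (d : ℕ) : ℝ[X] :=
  (minpoly ℚ (2 * Real.cos (2 * π / d))).map (algebraMap ℚ ℝ)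

open IntermediateField

set_option maxHeartbeats 1000000
set_option synthInstance.maxHeartbeats 1000000

def qtrans (p : ℚ[X]) : ℚ[X] :=
  ∑ i ∈ Finset.range (p.natDegree + 1), C (p.coeff i) * (X ^ (p.natDegree - i) * (X ^ 2 + 1) ^ i)

theorem qtrans_aeval (p : ℚ[X]) (z : ℂ) (hz : z ≠ 0) :
    Polynomial.aeval z (qtrans p) = z ^ p.natDegree * Polynomial.aeval (z + z⁻¹) p := by
  rw [qtrans, map_sum, Polynomial.aeval_eq_sum_range, Finset.mul_sum]
  refine Finset.sum_congr rfl fun i hi => ?_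
  rw [Finset.mem_range] at hi
  have hi' : i ≤ p.natDegree := Nat.lt_succ_iff.mp hi
  simp only [map_mul, map_pow, map_add, aeval_X, aeval_C, aeval_one, map_one]
  have h1 : z + z⁻¹ = (z ^ 2 + 1) / z := by field_simp
  rw [h1, div_pow, Algebra.smul_def]
  have h2 : z ^ p.natDegree = z ^ (p.natDegree - i) * z ^ i := by
    rw [← pow_add, Nat.sub_add_cancel hi']
  field_simp [h2]
  rw [h2]
  ring

theorem X_sq_add_one_monic : ((X:ℚ[X]) ^ 2 + 1).Monic := by
  have : ((X:ℚ[X]) ^ 2 + 1) = X ^ 2 + C 1 := by simp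
  rw [this]
  exact monic_X_pow_add_C 1 (by norm_num)

theorem X_sq_add_one_natDegree : ((X:ℚ[X]) ^ 2 + 1).natDegree = 2 := by
  have : ((X:ℚ[X]) ^ 2 + 1) = X ^ 2 + C 1 := by simp
  rw [this]
  exact natDegree_X_pow_add_C

theorem qtrans_term_natDegree_le (p : ℚ[X]) (i : ℕ) (hi : i ≤ p.natDegree) :
    (C (p.coeff i) * (X ^ (p.natDegree - i) * ((X:ℚ[X]) ^ 2 + 1) ^ i)).natDegree ≤ p.natDegree + i := by
  refine le_trans (natDegree_mul_le) ?_
  rw [natDegree_C, zero_add]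
  refine le_trans (natDegree_mul_le) ?_
  have h1 : (X ^ (p.natDegree - i) : ℚ[X]).natDegree ≤ p.natDegree - i := natDegree_X_pow_le _
  have h2 : (((X:ℚ[X]) ^ 2 + 1) ^ i).natDegree = 2 * i := by
    rw [natDegree_pow, X_sq_add_one_natDegree]
    ring
  omega

theorem qtrans_monic (p : ℚ[X]) (hp : p.Monic) : (qtrans p).Monic ∧
    (qtrans p).natDegree = 2 * p.natDegree := by
  set k := p.natDegree with hk
  have hle : (qtrans p).natDegree ≤ 2 * k := by
    refine le_trans (Polynomial.natDegree_sum_le _ _) ?_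
    rw [Finset.fold_max_le]
    constructor
    · omega
    · intro i hi
      rw [Finset.mem_range] at hi
      have := qtrans_term_natDegree_le p i (by omega)
      simp only [Function.comp]
      omega
  have hcoeff : (qtrans p).coeff (2 * k) = 1 := by
    rw [qtrans, Polynomial.finset_sum_coeff]
    rw [Finset.sum_eq_single k]
    · have hmon : (((X:ℚ[X]) ^ 2 + 1) ^ k).Monic := X_sq_add_one_monic.pow k
      have hdeg : (((X:ℚ[X]) ^ 2 + 1) ^ k).natDegree = 2 * k := by
        rw [natDegree_pow, X_sq_add_one_natDegree]; ring
      have : p.coeff k = 1 := hp.coeff_natDegree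
      rw [this]
      simp only [Nat.sub_self, pow_zero, one_mul, map_one]
      rw [← hdeg]
      rw [← hk, Nat.sub_self, pow_zero, one_mul]
      exact hmon.coeff_natDegree
    · intro i hi hne
      rw [Finset.mem_range] at hi
      apply Polynomial.coeff_eq_zero_of_natDegree_lt
      have := qtrans_term_natDegree_le p i (by omega)
      omega
    · intro h
      exact absurd (Finset.self_mem_range_succ k) h
  constructor
  · exact Polynomial.monic_of_natDegree_le_of_coeff_eq_one (2 * k) hle hcoeff
  · have h1 : 2 * k ≤ (qtrans p).natDegree := Polynomial.le_natDegree_of_ne_zero (by rw [hcoeff]; norm_num)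
    omega

theorem beta_eq (d : ℕ) (hd : d ≠ 0) :
    (algebraMap ℝ ℂ) (2 * Real.cos (2 * π / d)) =
      Complex.exp (2 * π * Complex.I / d) + (Complex.exp (2 * π * Complex.I / d))⁻¹ := by
  have h1 : (2 * π * Complex.I / d) = ((2 * π / d : ℝ) : ℂ) * Complex.I := by
    push_cast; ring
  rw [h1, ← Complex.exp_neg, ← neg_mul]
  have := Complex.two_cos (x := ((2 * π / d : ℝ) : ℂ))
  rw [← this, ← Complex.ofReal_cos]
  simp [Complex.ofReal_mul]

theorem deg_le (d : ℕ) (hd : 3 ≤ d) :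
    2 * (minpoly ℚ (2 * Real.cos (2 * π / d))).natDegree ≤ Nat.totient d := by
  have hd0 : (d : ℕ) ≠ 0 := by omega
  set ζ : ℂ := Complex.exp (2 * π * Complex.I / d) with hζdef
  have hζ : IsPrimitiveRoot ζ d := Complex.isPrimitiveRoot_exp d hd0
  have hζint : IsIntegral ℚ ζ := (hζ.isIntegral (by omega)).tower_top
  have hζne : ζ ≠ 0 := by
    intro h
    exact absurd (h ▸ hζ.pow_eq_one) (by simp [zero_pow hd0])
  have hinv : ζ⁻¹ = ζ ^ (d - 1) := by
    apply inv_eq_of_mul_eq_one_right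
    rw [← pow_succ']
    have : d - 1 + 1 = d := by omega
    rw [this, hζ.pow_eq_one]
  have hβint : IsIntegral ℚ (ζ + ζ⁻¹) := by
    rw [hinv]; exact hζint.add (hζint.pow _)
  -- K = ℚ(ζ)
  haveI hKfd : FiniteDimensional ℚ ℚ⟮ζ⟯ := IntermediateField.adjoin.finiteDimensional hζint
  have hKrank : Module.finrank ℚ ℚ⟮ζ⟯ = Nat.totient d := by
    rw [IntermediateField.adjoin.finrank hζint,
      ← Polynomial.cyclotomic_eq_minpoly_rat hζ (by omega), Polynomial.natDegree_cyclotomic]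
  set ζK : ℚ⟮ζ⟯ := IntermediateField.AdjoinSimple.gen ℚ ζ with hζK
  set βK : ℚ⟮ζ⟯ := ζK + ζK⁻¹ with hβK
  have hmapβ : algebraMap ℚ⟮ζ⟯ ℂ βK = ζ + ζ⁻¹ := by
    rw [hβK, map_add, map_inv₀]
    simp [hζK]
  have hminβ : minpoly ℚ βK = minpoly ℚ (2 * Real.cos (2 * π / d)) := by
    rw [← minpoly.algebraMap_eq (algebraMap ℚ⟮ζ⟯ ℂ).injective βK, hmapβ,
      ← beta_eq d hd0, minpoly.algebraMap_eq (algebraMap ℝ ℂ).injective]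
  have hβKint : IsIntegral ℚ βK := IsIntegral.of_finite ℚ βK
  have hFrank : Module.finrank ℚ (↥ℚ⟮βK⟯) = (minpoly ℚ (2 * Real.cos (2 * π / d))).natDegree := by
    rw [IntermediateField.adjoin.finrank hβKint, hminβ]
  haveI : FiniteDimensional (↥ℚ⟮βK⟯) ℚ⟮ζ⟯ := FiniteDimensional.right ℚ _ _
  have htower : Module.finrank ℚ (↥ℚ⟮βK⟯) * Module.finrank (↥ℚ⟮βK⟯) ℚ⟮ζ⟯ = Nat.totient d := by
    rw [Module.finrank_mul_finrank, hKrank]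
  have hne1 : Module.finrank (↥ℚ⟮βK⟯) ℚ⟮ζ⟯ ≠ 1 := by
    intro h1
    have hbt : (⊥ : Subalgebra (↥ℚ⟮βK⟯) ℚ⟮ζ⟯) = ⊤ := Subalgebra.bot_eq_top_iff_finrank_eq_one.mpr h1
    have hζKmem : ζK ∈ (⊥ : Subalgebra (↥ℚ⟮βK⟯) ℚ⟮ζ⟯) := hbt ▸ Algebra.mem_top
    rw [Algebra.mem_bot] at hζKmem
    obtain ⟨f, hf⟩ := hζKmem
    have hRinv : ∀ x ∈ ((Complex.ofRealAm.restrictScalars ℚ).range : Subalgebra ℚ ℂ), x⁻¹ ∈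
        ((Complex.ofRealAm.restrictScalars ℚ).range : Subalgebra ℚ ℂ) := by
      rintro x ⟨r, rfl⟩
      exact ⟨r⁻¹, by simp [Complex.ofRealAm_coe]⟩
    set Rif : IntermediateField ℚ ℂ :=
      ((Complex.ofRealAm.restrictScalars ℚ).range : Subalgebra ℚ ℂ).toIntermediateField hRinv
      with hRif
    have hRifmem : ∀ x : ℂ, x ∈ Rif ↔ ∃ r : ℝ, (r : ℂ) = x := by
      intro x; rfl
    set R : IntermediateField ℚ ℚ⟮ζ⟯ := Rif.comap (IsScalarTower.toAlgHom ℚ ℚ⟮ζ⟯ ℂ) with hR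
    have hFR : ℚ⟮βK⟯ ≤ R := by
      rw [IntermediateField.adjoin_le_iff]
      intro x hx
      rw [Set.mem_singleton_iff] at hx
      subst hx
      show algebraMap ℚ⟮ζ⟯ ℂ βK ∈ Rif
      rw [hmapβ, ← beta_eq d hd0, hRifmem]
      exact ⟨2 * Real.cos (2 * π / d), rfl⟩
    have hζKR : ζK ∈ R := hf ▸ hFR f.2
    have hmem : (algebraMap ℚ⟮ζ⟯ ℂ ζK) ∈ Rif := hζKR
    rw [hRifmem] at hmem
    obtain ⟨r, hr⟩ := hmem
    have hζval : algebraMap ℚ⟮ζ⟯ ℂ ζK = ζ := rfl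
    have him : ζ.im = 0 := by
      rw [← hζval, ← hr]
      simp
    have himpos : ζ.im > 0 := by
      have h1 : (2 * π * Complex.I / d) = ((2 * π / d : ℝ) : ℂ) * Complex.I := by
        push_cast; ring
      rw [hζdef, h1, Complex.exp_ofReal_mul_I_im]
      apply Real.sin_pos_of_pos_of_lt_pi
      · positivity
      · rw [div_lt_iff₀ (by positivity)]
        have hdr : (3:ℝ) ≤ d := by exact_mod_cast hd
        nlinarith [Real.pi_pos, mul_le_mul_of_nonneg_left hdr (le_of_lt Real.pi_pos)]
    linarith
  have hpos : 0 < Module.finrank (↥ℚ⟮βK⟯) ℚ⟮ζ⟯ := Module.finrank_pos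
  have h2 : 2 ≤ Module.finrank (↥ℚ⟮βK⟯) ℚ⟮ζ⟯ := by omega
  rw [← hFrank, ← htower, mul_comm]
  exact Nat.mul_le_mul_left _ h2

theorem key_cyclo (d : ℕ) (hd : 3 ≤ d) :
    ∃ k : ℕ, 2 * k = Nat.totient d ∧ ∀ z : ℂ, z ≠ 0 →
      ((psiR d).map (algebraMap ℝ ℂ)).eval (z + z⁻¹) * z ^ k =
        (Polynomial.cyclotomic d ℂ).eval z := by
  have hd0 : (d : ℕ) ≠ 0 := by omega
  set ζ : ℂ := Complex.exp (2 * π * Complex.I / d) with hζdef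
  have hζ : IsPrimitiveRoot ζ d := Complex.isPrimitiveRoot_exp d hd0
  have hζne : ζ ≠ 0 := by
    intro h
    exact absurd (h ▸ hζ.pow_eq_one) (by simp [zero_pow hd0])
  set p : ℚ[X] := minpoly ℚ (2 * Real.cos (2 * π / d)) with hp
  have hint : IsIntegral ℚ (2 * Real.cos (2 * π / d)) := by
    rw [← isIntegral_algebraMap_iff (algebraMap ℝ ℂ).injective, beta_eq d hd0]
    have hζint : IsIntegral ℚ ζ := (hζ.isIntegral (by omega)).tower_top
    have hinv : ζ⁻¹ = ζ ^ (d - 1) := by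
      apply inv_eq_of_mul_eq_one_right
      rw [← pow_succ']
      have : d - 1 + 1 = d := by omega
      rw [this, hζ.pow_eq_one]
    rw [hinv]
    exact hζint.add (hζint.pow _)
  have hpmonic : p.Monic := minpoly.monic hint
  obtain ⟨hqmonic, hqdeg⟩ := qtrans_monic p hpmonic
  -- the minimal polynomial of ζ over ℚ is the cyclotomic polynomial
  have hcyc : Polynomial.cyclotomic d ℚ = minpoly ℚ ζ :=
    Polynomial.cyclotomic_eq_minpoly_rat hζ (by omega)
  -- p vanishes at ζ + ζ⁻¹
  have hpz : Polynomial.aeval (ζ + ζ⁻¹) p = 0 := by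
    rw [hp, ← beta_eq d hd0, Polynomial.aeval_algebraMap_apply, minpoly.aeval, map_zero]
  have hqζ : Polynomial.aeval ζ (qtrans p) = 0 := by
    rw [qtrans_aeval p ζ hζne, hpz, mul_zero]
  have hdvd : minpoly ℚ ζ ∣ qtrans p := minpoly.dvd ℚ ζ hqζ
  have hq : qtrans p = Polynomial.cyclotomic d ℚ := by
    apply Polynomial.eq_of_monic_of_dvd_of_natDegree_le (Polynomial.cyclotomic.monic d ℚ) hqmonic
    · rw [hcyc]; exact hdvd
    · rw [hqdeg, Polynomial.natDegree_cyclotomic]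
      exact deg_le d hd
  have h2k : 2 * p.natDegree = Nat.totient d := by
    rw [← hqdeg, hq, Polynomial.natDegree_cyclotomic]
  refine ⟨p.natDegree, h2k, fun z hz => ?_⟩
  have hmapmap : (psiR d).map (algebraMap ℝ ℂ) = p.map (algebraMap ℚ ℂ) := by
    rw [psiR, Polynomial.map_map, ← IsScalarTower.algebraMap_eq]
  rw [hmapmap]
  have h1 : (p.map (algebraMap ℚ ℂ)).eval (z + z⁻¹) = Polynomial.aeval (z + z⁻¹) p := by
    rw [Polynomial.aeval_def, Polynomial.eval_map]
  have h2 : (Polynomial.cyclotomic d ℂ).eval z = Polynomial.aeval z (qtrans p) := by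
    rw [hq, ← Polynomial.map_cyclotomic d (algebraMap ℚ ℂ), Polynomial.eval_map,
      Polynomial.aeval_def]
  rw [h1, h2, qtrans_aeval p z hz]
  ring

theorem key_one : ∀ z : ℂ, z ≠ 0 →
    ((psiR 1).map (algebraMap ℝ ℂ)).eval (z + z⁻¹) * z ^ 1 =
      ((Polynomial.cyclotomic 1 ℂ) * (X - 1)).eval z := by
  intro z hz
  have hval : (2 * Real.cos (2 * π / (1:ℕ)) : ℝ) = algebraMap ℚ ℝ 2 := by
    norm_num [Real.cos_two_pi]
  have hpsi : psiR 1 = X - C 2 := by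
    rw [psiR, hval, minpoly.eq_X_sub_C]
    simp [Polynomial.map_sub]
  rw [hpsi, Polynomial.cyclotomic_one]
  simp only [Polynomial.map_sub, Polynomial.map_X, Polynomial.map_C, Polynomial.eval_mul,
    Polynomial.eval_sub, Polynomial.eval_X, Polynomial.eval_C, Polynomial.eval_one, pow_one]
  have : (C (2:ℂ)).eval (z + z⁻¹) = 2 := Polynomial.eval_C
  field_simp
  simp only [map_ofNat]
  ring

/-- Watkins–Zeitlin, odd case: for `n = 2m+1`,
`∏_{d ∣ n} ψ_d(2t) = 2 (T_{m+1}(t) − T_m(t))`. -/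
theorem prod_psi_two_X_odd (m n : ℕ) (hn : n = 2 * m + 1) :
    ∏ d ∈ n.divisors, (psiR d).comp (2 * X) =
      2 * (Polynomial.Chebyshev.T ℝ (m + 1) - Polynomial.Chebyshev.T ℝ m) := by
  have hn0 : n ≠ 0 := by omega
  have hodd : Odd n := ⟨m, by omega⟩
  have hex : ∀ d : ℕ, ∃ k : ℕ, d ∈ n.divisors →
      (2 * k = (if d = 1 then 2 else Nat.totient d) ∧ ∀ z : ℂ, z ≠ 0 →
        ((psiR d).map (algebraMap ℝ ℂ)).eval (z + z⁻¹) * z ^ k =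
          ((Polynomial.cyclotomic d ℂ) * (if d = 1 then X - 1 else 1)).eval z) := by
    intro d
    by_cases hd1 : d = 1
    · subst hd1
      exact ⟨1, fun _ => ⟨by norm_num, fun z hz => by simpa using key_one z hz⟩⟩
    · by_cases hdmem : d ∈ n.divisors
      · have hd3 : 3 ≤ d := by
          have hd0 : d ≠ 0 := fun h => by simp [h] at hdmem
          have hdvd : d ∣ n := Nat.dvd_of_mem_divisors hdmem
          have hd2 : d ≠ 2 := by
            intro h
            subst h
            rw [Nat.odd_iff] at hodd
            omega
          omega
        obtain ⟨k, hk1, hk2⟩ := key_cyclo d hd3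
        exact ⟨k, fun _ => ⟨by rw [if_neg hd1]; exact hk1,
          fun z hz => by rw [if_neg hd1, mul_one]; exact hk2 z hz⟩⟩
      · exact ⟨0, fun h => absurd h hdmem⟩
  choose k hk using hex
  have hsum : ∑ d ∈ n.divisors, k d = m + 1 := by
    have h2 : 2 * ∑ d ∈ n.divisors, k d = 2 * (m + 1) := by
      rw [Finset.mul_sum]
      have hc : ∀ d ∈ n.divisors, 2 * k d = Nat.totient d + (if d = 1 then 1 else 0) := by
        intro d hd
        rw [(hk d hd).1]
        split
        · rename_i h; subst h; simp [Nat.totient_one]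
        · simp
      rw [Finset.sum_congr rfl hc, Finset.sum_add_distrib, Nat.sum_totient,
        Finset.sum_ite_eq' n.divisors 1 (fun _ => 1),
        if_pos (Nat.one_mem_divisors.mpr hn0)]
      omega
    omega
  apply Polynomial.eq_of_infinite_eval_eq
  have hIcc : (Set.Icc (-1:ℝ) 1).Infinite := Set.Icc_infinite (by norm_num)
  refine Set.Infinite.mono ?_ hIcc
  intro x hx
  have hx' : x ∈ Set.range Real.cos := by rw [Real.range_cos]; exact hx
  obtain ⟨θ, rfl⟩ := hx'
  simp only [Set.mem_setOf_eq]
  set z : ℂ := Complex.exp (θ * Complex.I) with hzdef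
  have hz : z ≠ 0 := Complex.exp_ne_zero _
  have hcos : ∀ j : ℕ, ((Real.cos (j * θ) : ℝ) : ℂ) * 2 = z ^ j + (z ^ j)⁻¹ := by
    intro j
    have he : Complex.exp (((j * θ : ℝ) : ℂ) * Complex.I) = z ^ j := by
      rw [hzdef, ← Complex.exp_nat_mul]
      congr 1
      push_cast
      ring
    have he' : Complex.exp (-((j * θ : ℝ) : ℂ) * Complex.I) = (z ^ j)⁻¹ := by
      rw [neg_mul, Complex.exp_neg, he]
    rw [Complex.ofReal_cos, mul_comm, Complex.two_cos, he, he']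
  -- evaluate LHS
  have hL : Polynomial.eval (Real.cos θ) (∏ d ∈ n.divisors, (psiR d).comp (2 * X)) =
      ∏ d ∈ n.divisors, (psiR d).eval (2 * Real.cos θ) := by
    rw [Polynomial.eval_prod]
    exact Finset.prod_congr rfl fun d _ => by
      rw [Polynomial.eval_comp]
      norm_num
  have hR : Polynomial.eval (Real.cos θ)
      (2 * (Polynomial.Chebyshev.T ℝ (m + 1) - Polynomial.Chebyshev.T ℝ m)) =
      2 * (Real.cos ((m + 1) * θ) - Real.cos (m * θ)) := by
    simp only [Polynomial.eval_mul, Polynomial.eval_sub, Polynomial.eval_ofNat,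
      Polynomial.Chebyshev.T_real_cos]
    push_cast
    ring_nf
  rw [hL, hR]
  -- move to ℂ
  have hzz : ((2 * Real.cos θ : ℝ) : ℂ) = z + z⁻¹ := by
    have h := hcos 1
    simp only [pow_one, Nat.cast_one, one_mul] at h
    push_cast at h ⊢
    linear_combination h
  have hcast : ∀ d, (((psiR d).eval (2 * Real.cos θ) : ℝ) : ℂ) =
      ((psiR d).map (algebraMap ℝ ℂ)).eval (((2 * Real.cos θ : ℝ) : ℂ)) := by
    intro d
    rw [show ((2 * Real.cos θ : ℝ) : ℂ) = algebraMap ℝ ℂ (2 * Real.cos θ) from rfl,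
      Polynomial.eval_map, Polynomial.eval₂_at_apply]
    rfl
  have hmainL : ((∏ d ∈ n.divisors, (psiR d).eval (2 * Real.cos θ) : ℝ) : ℂ) * z ^ (m + 1) =
      (z ^ n - 1) * (z - 1) := by
    rw [Complex.ofReal_prod, ← hsum, ← Finset.prod_pow_eq_pow_sum, ← Finset.prod_mul_distrib]
    have hterm : ∀ d ∈ n.divisors,
        (((psiR d).eval (2 * Real.cos θ) : ℝ) : ℂ) * z ^ k d =
        ((Polynomial.cyclotomic d ℂ) * (if d = 1 then X - 1 else 1)).eval z := by
      intro d hd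
      rw [hcast d, hzz]
      exact (hk d hd).2 z hz
    rw [Finset.prod_congr rfl hterm, ← Polynomial.eval_prod, Finset.prod_mul_distrib,
      Polynomial.prod_cyclotomic_eq_X_pow_sub_one (by omega) ℂ]
    have hite : (∏ d ∈ n.divisors, (if d = 1 then (X : ℂ[X]) - 1 else 1)) = X - 1 := by
      rw [Finset.prod_ite_eq' n.divisors 1 (fun _ => (X : ℂ[X]) - 1),
        if_pos (Nat.one_mem_divisors.mpr hn0)]
    rw [hite, Polynomial.eval_mul, Polynomial.eval_sub, Polynomial.eval_pow, Polynomial.eval_X,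
      Polynomial.eval_one, Polynomial.eval_sub, Polynomial.eval_X, Polynomial.eval_one]
  have h1 := hcos (m + 1)
  have h2 := hcos m
  push_cast at h1 h2
  have h1' : Complex.cos ((m + 1 : ℂ) * θ) * 2 * z ^ (m + 1) =
      z ^ (m + 1) * z ^ (m + 1) + 1 := by
    rw [h1]
    field_simp
  have h2' : Complex.cos ((m : ℂ) * θ) * 2 * z ^ m = z ^ m * z ^ m + 1 := by
    rw [h2]
    field_simp
  have hzn : z ^ n = z ^ (2 * m + 1) := by rw [hn]
  have hmainR : (((2 * (Real.cos ((m + 1) * θ) - Real.cos (m * θ)) : ℝ)) : ℂ) * z ^ (m + 1) =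
      (z ^ n - 1) * (z - 1) := by
    rw [hzn]
    push_cast
    linear_combination h1' - z * h2'
  have hmain := hmainL.trans hmainR.symm
  have := mul_right_cancel₀ (pow_ne_zero (m + 1) hz) hmain
  exact_mod_cast this

end
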